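/- If two closed curves A and B in ℝ³ have intersecting convex hulls, then the union A ∪ B has nonempty second hull: any point in conv(A) ∩ conv(B) lies in h₂(A ∪ B). -/

import Mathlib

open Set
open scoped Classical

noncomputable section

variable {E : Type*} [NormedAddCommGroup E] [NormedSpace ℝ E]

/-- The connected components of the periodic level set `Z ⊆ ℝ`, with one
canonical representative chosen per period. -/
def circComps (Z : Set ℝ) : Set (Set ℝ) :=
  {S | ∃ t ∈ Z, S = connectedComponentIn Z t ∧ sInf S ∈ Ico (0 : ℝ) 1}

/-- The arc of the curve just after the component `S` lies above the level `c`. -/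
def AboveAfter (g : ℝ → ℝ) (c : ℝ) (S : Set ℝ) : Prop :=
  ∃ ε > 0, ∀ s ∈ Ioo (sSup S) (sSup S + ε), c < g s

/-- The arc of the curve just before the component `S` lies above the level `c`. -/
def AboveBefore (g : ℝ → ℝ) (c : ℝ) (S : Set ℝ) : Prop :=
  ∃ ε > 0, ∀ s ∈ Ioo (sInf S - ε) (sInf S), c < g s

/-- A glancing intersection: the arcs just before and just after the component `S`
lie on the same side of the level `c`; such components are counted twice. -/
def IsGlancing (g : ℝ → ℝ) (c : ℝ) (S : Set ℝ) : Prop :=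
  AboveBefore g c S ↔ AboveAfter g c S

/-- Number of intersections of the closed curve `K` (a `1`-periodic map `ℝ → E`)
with the hyperplane `{x | f x = c}`: components of the preimage are counted once,
glancing components twice, and a curve contained in the hyperplane counts as two
intersections. (Infinitely many components give an infinite count.) -/
def cutCount (K : ℝ → E) (f : E →L[ℝ] ℝ) (c : ℝ) : Cardinal :=
  if {t : ℝ | f (K t) = c} = univ then 2
  else Cardinal.mk (circComps {t : ℝ | f (K t) = c})
    + Cardinal.mk ({S ∈ circComps {t : ℝ | f (K t) = c} | IsGlancing (fun t => f (K t)) c S})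

/-- `K` cuts the hyperplane `{x | f x = c}` at least `m` times. -/
def CutsAtLeast (K : ℝ → E) (f : E →L[ℝ] ℝ) (c : ℝ) (m : ℕ) : Prop :=
  (m : Cardinal) ≤ cutCount K f c

/-- The `n`-th hull of the closed curve `K`: points `p` such that every hyperplane
through `p` is cut at least `2n` times by `K`. -/
def hull (K : ℝ → E) (n : ℕ) : Set E :=
  {p | ∀ f : E →L[ℝ] ℝ, f ≠ 0 → CutsAtLeast K f (f p) (2 * n)}

/-- The `n`-th hull of the two-component link `A ∪ B`: points `p` such that every
plane through `p` is cut at least `2n` times in total by the two components. -/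
def hull2 (A B : ℝ → E) (n : ℕ) : Set E :=
  {p | ∀ f : E →L[ℝ] ℝ, f ≠ 0 →
    ((2 * n : ℕ) : Cardinal) ≤ cutCount A f (f p) + cutCount B f (f p)}

private lemma sInf_image_add {S : Set ℝ} (hne : S.Nonempty) (hbd : BddBelow S) (r : ℝ) :
    sInf ((fun x => x + r) '' S) = sInf S + r := by
  have h := isGLB_csInf hne hbd
  have h2 : IsGLB ((fun x => x + r) '' S) (sInf S + r) := by
    constructor
    · rintro x ⟨y, hy, rfl⟩
      show sInf S + r ≤ y + r
      linarith [h.1 hy]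
    · intro y hy
      have hylb : y - r ∈ lowerBounds S := by
        intro x hx
        have := hy ⟨x, hx, rfl⟩
        simp only [ge_iff_le] at this
        linarith
      linarith [h.2 hylb]
  exact h2.csInf_eq (hne.image _)

private lemma core (g : ℝ → ℝ) (c : ℝ) (hg : Continuous g) (hgper : Function.Periodic g 1)
    (hZu : {t : ℝ | g t = c} ≠ univ) (hc : ∃ t, g t = c) :
    (2 : Cardinal) ≤ Cardinal.mk (circComps {t : ℝ | g t = c})
      + Cardinal.mk ({S ∈ circComps {t : ℝ | g t = c} | IsGlancing g c S}) := by
  set Z : Set ℝ := {t : ℝ | g t = c} with hZdef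
  have hZint : ∀ (n : ℤ) (x : ℝ), x ∈ Z → x + (n : ℝ) ∈ Z := by
    intro n x hx
    have h := (hgper.int_mul n) x
    simp only [mul_one] at h
    show g (x + n) = c
    rw [h]; exact hx
  have hZclosed : IsClosed Z := isClosed_eq hg continuous_const
  obtain ⟨x0, hx0⟩ : ∃ x, x ∉ Z := by
    by_contra h
    push_neg at h
    exact hZu (eq_univ_iff_forall.2 h)
  have hx0n : ∀ n : ℤ, x0 + (n : ℝ) ∉ Z := by
    intro n h
    apply hx0
    have h2 := hZint (-n) (x0 + n) h
    have : x0 + (n : ℝ) + ((-n : ℤ) : ℝ) = x0 := by push_cast; ring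
    rwa [this] at h2
  -- boundedness of components
  have hbdd : ∀ t ∈ Z, BddBelow (connectedComponentIn Z t) ∧ BddAbove (connectedComponentIn Z t) := by
    intro t ht
    have hord : (connectedComponentIn Z t).OrdConnected :=
      isPreconnected_connectedComponentIn.ordConnected
    have htS : t ∈ connectedComponentIn Z t := mem_connectedComponentIn ht
    have hSZ : connectedComponentIn Z t ⊆ Z := connectedComponentIn_subset _ _
    constructor
    · by_contra h
      obtain ⟨s, hsS, hlt⟩ := not_bddBelow_iff.mp h (x0 + (⌊t - x0⌋ - 1 : ℤ))
      have h1 : x0 + ((⌊t - x0⌋ - 1 : ℤ) : ℝ) ≤ t := by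
        push_cast
        linarith [Int.floor_le (t - x0)]
      have hmem : x0 + ((⌊t - x0⌋ - 1 : ℤ) : ℝ) ∈ connectedComponentIn Z t :=
        hord.out hsS htS ⟨le_of_lt hlt, h1⟩
      exact hx0n _ (hSZ hmem)
    · by_contra h
      obtain ⟨s, hsS, hlt⟩ := not_bddAbove_iff.mp h (x0 + (⌈t - x0⌉ : ℤ))
      have h1 : t ≤ x0 + ((⌈t - x0⌉ : ℤ) : ℝ) := by
        linarith [Int.le_ceil (t - x0)]
      have hmem : x0 + ((⌈t - x0⌉ : ℤ) : ℝ) ∈ connectedComponentIn Z t :=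
        hord.out htS hsS ⟨h1, le_of_lt hlt⟩
      exact hx0n _ (hSZ hmem)
  -- translation of components
  have hccShift : ∀ u ∈ Z, ∀ n : ℤ,
      (fun x : ℝ => x + (n : ℝ)) '' connectedComponentIn Z u
        = connectedComponentIn Z (u + (n : ℝ)) := by
    intro u hu n
    have himg : (fun x : ℝ => x + (n : ℝ)) '' Z = Z := by
      ext x
      constructor
      · rintro ⟨y, hy, rfl⟩
        exact hZint n y hy
      · intro hx
        refine ⟨x + ((-n : ℤ) : ℝ), hZint (-n) x hx, ?_⟩
        push_cast; ring
    have h := (Homeomorph.addRight ((n : ℝ))).image_connectedComponentIn (s := Z) hu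
    simp only [Homeomorph.coe_addRight] at h
    rwa [himg] at h
  -- shifting a component into the fundamental domain
  have hshift : ∀ u ∈ Z, ∃ (m : ℤ) (S' : Set ℝ), S' ∈ circComps Z ∧ u - (m : ℝ) ∈ S' := by
    intro u hu
    have hTne : (connectedComponentIn Z u).Nonempty := ⟨u, mem_connectedComponentIn hu⟩
    obtain ⟨hTbb, _⟩ := hbdd u hu
    set m : ℤ := ⌊sInf (connectedComponentIn Z u)⌋ with hm
    have humem : u - (m : ℝ) ∈ Z := by
      have h2 := hZint (-m) u hu
      have : u + ((-m : ℤ) : ℝ) = u - m := by push_cast; ring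
      rwa [this] at h2
    have hTeq : connectedComponentIn Z (u - (m : ℝ))
        = (fun x : ℝ => x + (-(m : ℝ))) '' connectedComponentIn Z u := by
      have h := hccShift u hu (-m)
      have h2 : u + ((-m : ℤ) : ℝ) = u - m := by push_cast; ring
      rw [h2] at h
      rw [← h]
      norm_num
    refine ⟨m, connectedComponentIn Z (u - (m : ℝ)), ⟨u - (m : ℝ), humem, rfl, ?_⟩,
      mem_connectedComponentIn humem⟩
    rw [hTeq, sInf_image_add hTne hTbb]
    constructor
    · have := Int.floor_le (sInf (connectedComponentIn Z u))
      rw [← hm] at this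
      linarith
    · have := Int.lt_floor_add_one (sInf (connectedComponentIn Z u))
      rw [← hm] at this
      linarith
  -- circComps is nonempty
  obtain ⟨t0, ht0⟩ := hc
  obtain ⟨m0, S, hS, -⟩ := hshift t0 ht0
  by_cases h2 : ∃ T ∈ circComps Z, T ≠ S
  · -- at least two components
    obtain ⟨T, hT, hTS⟩ := h2
    have : (2 : Cardinal) ≤ Cardinal.mk (circComps Z) :=
      Cardinal.two_le_iff.2 ⟨⟨T, hT⟩, ⟨S, hS⟩, by simpa using hTS⟩
    exact this.trans (self_le_add_right _ _)
  · -- exactly one component: show it is glancing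
    push_neg at h2
    have hcs : circComps Z = {S} := by
      ext T
      constructor
      · intro hT
        exact h2 T hT
      · rintro rfl
        exact hS
    obtain ⟨t, htZ, hSeq, hSInf⟩ := hS
    have hSne : S.Nonempty := ⟨t, hSeq ▸ mem_connectedComponentIn htZ⟩
    have hSbb : BddBelow S := hSeq ▸ (hbdd t htZ).1
    have hSba : BddAbove S := hSeq ▸ (hbdd t htZ).2
    have hord : S.OrdConnected := hSeq ▸ isPreconnected_connectedComponentIn.ordConnected
    have hSZ : S ⊆ Z := hSeq ▸ connectedComponentIn_subset _ _
    set a : ℝ := sInf S with ha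
    set b : ℝ := sSup S with hb
    have hab : a ≤ b := (csInf_le hSbb hSne.some_mem).trans (le_csSup hSba hSne.some_mem)
    have hIoo : Ioo a b ⊆ S := by
      rintro x ⟨hax, hxb⟩
      obtain ⟨s1, hs1, h1⟩ := exists_lt_of_csInf_lt hSne hax
      obtain ⟨s2, hs2, h2⟩ := exists_lt_of_lt_csSup hSne hxb
      exact hord.out hs1 hs2 ⟨le_of_lt h1, le_of_lt h2⟩
    have haZ : a ∈ Z := by
      have : closure S ⊆ Z := closure_minimal hSZ hZclosed
      exact this (csInf_mem_closure hSne hSbb)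
    have hSIcc : S ⊆ Icc a b := fun x hx => ⟨csInf_le hSbb hx, le_csSup hSba hx⟩
    have hblt : b < a + 1 := by
      by_contra hcon
      push_neg at hcon
      set n : ℤ := ⌈a - x0⌉ with hn
      have h1 : a ≤ x0 + (n : ℝ) := by
        have := Int.le_ceil (a - x0); rw [← hn] at this; linarith
      have h2 : x0 + (n : ℝ) < a + 1 := by
        have := Int.ceil_lt_add_one (a - x0); rw [← hn] at this; linarith
      rcases eq_or_lt_of_le h1 with heq | hlt
      · exact hx0n n (heq ▸ haZ)
      · exact hx0n n (hSZ (hIoo ⟨hlt, by linarith⟩))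
    have hgap : ∀ u ∈ Ioo b (a + 1), u ∉ Z := by
      rintro u ⟨hbu, hua⟩ huZ
      obtain ⟨m, S', hS', hmem⟩ := hshift u huZ
      rw [hcs, mem_singleton_iff] at hS'
      subst hS'
      obtain ⟨hle1, hle2⟩ := hSIcc hmem
      rcases le_or_gt m 0 with hm | hm
      · have : (m : ℝ) ≤ 0 := by exact_mod_cast hm
        linarith
      · have : (1 : ℝ) ≤ (m : ℝ) := by exact_mod_cast hm
        linarith
    have hsign : (∀ s ∈ Ioo b (a + 1), c < g s) ∨ (∀ s ∈ Ioo b (a + 1), g s < c) := by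
      by_contra hcon
      push_neg at hcon
      obtain ⟨⟨s1, hs1, h1⟩, ⟨s2, hs2, h2⟩⟩ := hcon
      have hival := intermediate_value_uIcc (f := g) (a := s1) (b := s2) hg.continuousOn
      have hcmem : c ∈ uIcc (g s1) (g s2) := mem_uIcc.2 (Or.inl ⟨h1, h2⟩)
      obtain ⟨s, hs, hgs⟩ := hival hcmem
      have hsI : s ∈ Ioo b (a + 1) := (ordConnected_Ioo.uIcc_subset hs1 hs2) hs
      exact hgap s hsI hgs
    have hpos : 0 < a + 1 - b := by linarith
    have hAfter : AboveAfter g c S ↔ (∀ s ∈ Ioo b (a + 1), c < g s) := by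
      constructor
      · rintro ⟨ε, hε, hgt⟩
        rcases hsign with hP | hQ
        · exact hP
        · exfalso
          set δ := min ε (a + 1 - b) with hδ
          have hδpos : 0 < δ := lt_min hε hpos
          have hδε : δ ≤ ε := min_le_left _ _
          have hδb : δ ≤ a + 1 - b := min_le_right _ _
          have hmem1 : b + δ / 2 ∈ Ioo (sSup S) (sSup S + ε) := by
            rw [← hb]
            constructor <;> [linarith; linarith]
          have hmem2 : b + δ / 2 ∈ Ioo b (a + 1) := ⟨by linarith, by linarith⟩
          have := hgt _ hmem1
          have := hQ _ hmem2
          linarith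
      · intro hP
        refine ⟨a + 1 - b, hpos, fun s hs => ?_⟩
        rw [← hb] at hs
        exact hP s ⟨hs.1, by linarith [hs.2]⟩
    have hBefore : AboveBefore g c S ↔ (∀ s ∈ Ioo b (a + 1), c < g s) := by
      constructor
      · rintro ⟨ε, hε, hgt⟩
        rcases hsign with hP | hQ
        · exact hP
        · exfalso
          set δ := min ε (a + 1 - b) with hδ
          have hδpos : 0 < δ := lt_min hε hpos
          have hδε : δ ≤ ε := min_le_left _ _
          have hδb : δ ≤ a + 1 - b := min_le_right _ _
          have hmem1 : a - δ / 2 ∈ Ioo (sInf S - ε) (sInf S) := by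
            rw [← ha]
            constructor <;> [linarith; linarith]
          have hmem2 : a - δ / 2 + 1 ∈ Ioo b (a + 1) := ⟨by linarith, by linarith⟩
          have hg1 := hgt _ hmem1
          have hg2 := hQ _ hmem2
          have hper' : g (a - δ / 2 + 1) = g (a - δ / 2) := hgper (a - δ / 2)
          linarith
      · intro hP
        refine ⟨a + 1 - b, hpos, fun s hs => ?_⟩
        rw [← ha] at hs
        have hs1 : s + 1 ∈ Ioo b (a + 1) := ⟨by linarith [hs.1], by linarith [hs.2]⟩
        have := hP _ hs1
        have hper' : g (s + 1) = g s := hgper s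
        linarith
    have hglance : IsGlancing g c S := hBefore.trans hAfter.symm
    have hsep : {S' ∈ circComps Z | IsGlancing g c S'} = {S} := by
      ext x
      simp only [mem_sep_iff, hcs, mem_singleton_iff]
      constructor
      · rintro ⟨rfl, -⟩; rfl
      · rintro rfl; exact ⟨rfl, hglance⟩
    rw [hsep, hcs, Cardinal.mk_singleton]
    norm_num

private lemma two_le_cutCount (K : ℝ → E) (f : E →L[ℝ] ℝ) (hK : Continuous K)
    (hper : Function.Periodic K 1) {c : ℝ} (hc : ∃ t, f (K t) = c) :
    (2 : Cardinal) ≤ cutCount K f c := by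
  unfold cutCount
  split_ifs with h
  · exact le_refl _
  · exact core (fun t => f (K t)) c (f.continuous.comp hK)
      (fun x => by simp [hper x]) h hc

/-- If two closed curves `A` and `B` in `ℝ³` have intersecting
convex hulls, then any point of `conv(A) ∩ conv(B)` lies in `h₂(A ∪ B)`; in
particular the second hull of the union is nonempty. -/
theorem secondHull_of_intersecting_convexHulls
    (A B : ℝ → EuclideanSpace ℝ (Fin 3))
    (hA : Continuous A) (hAper : Function.Periodic A 1)
    (hB : Continuous B) (hBper : Function.Periodic B 1)
    (hmeet : (convexHull ℝ (Set.range A) ∩ convexHull ℝ (Set.range B)).Nonempty) :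
    convexHull ℝ (Set.range A) ∩ convexHull ℝ (Set.range B) ⊆ hull2 A B 2 ∧
    (hull2 A B 2).Nonempty := by
  have hsub : convexHull ℝ (Set.range A) ∩ convexHull ℝ (Set.range B) ⊆ hull2 A B 2 := by
    rintro p ⟨hpA, hpB⟩
    intro f hf
    have key : ∀ (K : ℝ → EuclideanSpace ℝ (Fin 3)), Continuous K → Function.Periodic K 1 →
        p ∈ convexHull ℝ (Set.range K) → ∃ t, f (K t) = f p := by
      intro K hK hKper hp
      set g : ℝ → ℝ := fun t => f (K t) with hgdef
      have hg : Continuous g := f.continuous.comp hK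
      have hgper : Function.Periodic g 1 := fun x => by simp [hgdef, hKper x]
      have h1 : f p ∈ (⇑f) '' (convexHull ℝ (Set.range K)) := ⟨p, hp, rfl⟩
      have himg : (⇑f) '' (convexHull ℝ (Set.range K))
          = convexHull ℝ ((⇑f) '' Set.range K) := by
        simpa using (f.toLinearMap.image_convexHull (Set.range K))
      have hrg : (⇑f) '' Set.range K = Set.range g := by
        rw [hgdef, ← Set.range_comp]; rfl
      rw [himg, hrg] at h1
      obtain ⟨t1, ht1, hmin⟩ := isCompact_Icc.exists_isMinOn
        (⟨0, le_refl (0:ℝ), zero_le_one⟩ : (Icc (0:ℝ) 1).Nonempty) hg.continuousOn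
      obtain ⟨t2, ht2, hmax⟩ := isCompact_Icc.exists_isMaxOn
        (⟨0, le_refl (0:ℝ), zero_le_one⟩ : (Icc (0:ℝ) 1).Nonempty) hg.continuousOn
      have hrange : Set.range g ⊆ Icc (g t1) (g t2) := by
        rintro y ⟨t, rfl⟩
        have hfr : g (t - (⌊t⌋ : ℝ) * 1) = g t := hgper.sub_int_mul_eq ⌊t⌋
        rw [mul_one] at hfr
        have h01 : t - ((⌊t⌋ : ℤ) : ℝ) ∈ Icc (0:ℝ) 1 :=
          ⟨by linarith [Int.floor_le t], by linarith [Int.lt_floor_add_one t]⟩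
        exact ⟨hfr ▸ isMinOn_iff.mp hmin _ h01, hfr ▸ isMaxOn_iff.mp hmax _ h01⟩
      have hc' : f p ∈ Icc (g t1) (g t2) :=
        (convexHull_min hrange (convex_Icc _ _)) h1
      have h12 : g t1 ≤ g t2 := (hrange ⟨t1, rfl⟩).2
      have hival := intermediate_value_uIcc (f := g) (a := t1) (b := t2) hg.continuousOn
      have hmem : f p ∈ uIcc (g t1) (g t2) := by
        rw [uIcc_of_le h12]; exact hc'
      obtain ⟨t, -, ht⟩ := hival hmem
      exact ⟨t, ht⟩
    have h4 : ((2 * 2 : ℕ) : Cardinal) = 2 + 2 := by norm_num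
    rw [h4]
    exact add_le_add (two_le_cutCount A f hA hAper (key A hA hAper hpA))
      (two_le_cutCount B f hB hBper (key B hB hBper hpB))
  obtain ⟨p, hp⟩ := hmeet
  exact ⟨hsub, ⟨p, hsub hp⟩⟩
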